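/- For p ≥ 0 and |x| < 1, ∑_{n=0}^∞ ( ∑_{j=0}^n (j+r)_{p,λ} ) x^n = (1/(1-x)^2) F_{p,λ}( x/(1-x) | r ). -/

import Mathlib

set_option maxHeartbeats 1000000


/-- Generalized falling factorial `(y)_{m,λ} = y(y-λ)⋯(y-(m-1)λ)`. -/
noncomputable def degFallFact (y l : ℝ) (m : ℕ) : ℝ :=
  ∏ i ∈ Finset.range m, (y - i * l)

lemma prod_sub_eq_descFactorial (n k : ℕ) :
    ∏ i ∈ Finset.range k, ((n : ℝ) - i) = (n.descFactorial k : ℝ) := by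
  rcases lt_or_ge n k with h | h
  · rw [Nat.descFactorial_eq_zero_iff_lt.2 h, Nat.cast_zero]
    exact Finset.prod_eq_zero (Finset.mem_range.2 h) (by simp)
  · induction k with
    | zero => simp
    | succ k ih =>
      rw [Finset.prod_range_succ, ih (le_of_lt h), Nat.descFactorial_succ,
        Nat.cast_mul, Nat.cast_sub (le_of_lt h)]
      ring

lemma hasSum_choose_shift {x : ℝ} (hx : |x| < 1) (k : ℕ) :
    HasSum (fun n : ℕ => (n.choose k : ℝ) * x ^ n) (x ^ k / (1 - x) ^ (k + 1)) := by
  have hx' : ‖x‖ < 1 := by rwa [Real.norm_eq_abs]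
  have h1 : HasSum (fun n : ℕ => ((n + k).choose k : ℝ) * x ^ (n + k))
      (x ^ k / (1 - x) ^ (k + 1)) := by
    have h := (hasSum_choose_mul_geometric_of_norm_lt_one k hx').mul_right (x ^ k)
    have e1 : (fun n : ℕ => ((n + k).choose k : ℝ) * x ^ (n + k)) =
        (fun n : ℕ => ((n + k).choose k : ℝ) * x ^ n * x ^ k) := by
      funext n; rw [pow_add]; ring
    have e2 : x ^ k / (1 - x) ^ (k + 1) = 1 / (1 - x) ^ (k + 1) * x ^ k := by ring
    rw [e1, e2]; exact h
  have hzero : ∑ i ∈ Finset.range k, (i.choose k : ℝ) * x ^ i = 0 := by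
    apply Finset.sum_eq_zero
    intro i hi
    rw [Nat.choose_eq_zero_of_lt (Finset.mem_range.1 hi)]
    simp
  refine (hasSum_nat_add_iff' (f := fun n : ℕ => (n.choose k : ℝ) * x ^ n) k).1 ?_
  rw [hzero, sub_zero]
  exact h1

/-- for `|x| < 1`,
`∑_{n≥0} (∑_{j=0}^n (j+r)_{p,λ}) x^n = (1/(1-x)^2) F_{p,λ}(x/(1-x) | r)`. -/
theorem tsum_partial_sums_eq_fubini (l : ℝ) (p r : ℕ) (S : ℕ → ℕ → ℝ)
    (hS : ∀ (m : ℕ) (x : ℝ), degFallFact (x + r) l m =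
      ∑ k ∈ Finset.range (m + 1), S m k * ∏ i ∈ Finset.range k, (x - i))
    (x : ℝ) (hx : |x| < 1) :
    HasSum (fun n : ℕ => (∑ j ∈ Finset.range (n + 1), degFallFact (j + r) l p) * x ^ n)
      ((1 / (1 - x) ^ 2) * ∑ k ∈ Finset.range (p + 1),
        (k.factorial : ℝ) * S p k * (x / (1 - x)) ^ k) := by
  have hx' : ‖x‖ < 1 := by rwa [Real.norm_eq_abs]
  have hx1 : (1 : ℝ) - x ≠ 0 := by
    intro h
    have : x = 1 := by linarith
    rw [this] at hx; norm_num at hx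
  set b : ℕ → ℝ := fun j => degFallFact ((j : ℝ) + r) l p with hb
  have hbj : ∀ j : ℕ, b j = ∑ k ∈ Finset.range (p + 1),
      S p k * ((k.factorial : ℝ) * (j.choose k : ℝ)) := by
    intro j
    rw [hb]
    simp only
    rw [hS p (j : ℝ)]
    refine Finset.sum_congr rfl fun k _ => ?_
    rw [prod_sub_eq_descFactorial, Nat.descFactorial_eq_factorial_mul_choose]
    push_cast; ring
  -- HasSum of b j * x^j
  have hT : HasSum (fun j : ℕ => b j * x ^ j)
      (∑ k ∈ Finset.range (p + 1), S p k * (k.factorial : ℝ) * (x ^ k / (1 - x) ^ (k + 1))) := by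
    have : ∀ j : ℕ, b j * x ^ j = ∑ k ∈ Finset.range (p + 1),
        (S p k * (k.factorial : ℝ)) * ((j.choose k : ℝ) * x ^ j) := by
      intro j
      rw [hbj j, Finset.sum_mul]
      refine Finset.sum_congr rfl fun k _ => by ring
    rw [funext this]
    exact hasSum_sum fun k _ => ((hasSum_choose_shift hx k).mul_left _)
  -- summability of norms
  have hnormk : ∀ k : ℕ, Summable (fun j : ℕ =>
      ‖(S p k * (k.factorial : ℝ)) * ((j.choose k : ℝ) * x ^ j)‖) := by
    intro k
    have h1 : HasSum (fun j : ℕ => (j.choose k : ℝ) * |x| ^ j)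
        (|x| ^ k / (1 - |x|) ^ (k + 1)) := hasSum_choose_shift (by rwa [abs_abs]) k
    have h2 := h1.summable.mul_left |S p k * (k.factorial : ℝ)|
    exact h2.congr fun j => by
      simp [Real.norm_eq_abs, abs_mul, abs_pow, Nat.abs_cast]
  have hbnorm : Summable (fun j : ℕ => ‖b j * x ^ j‖) := by
    have hsg : Summable (fun j : ℕ => ∑ k ∈ Finset.range (p + 1),
        ‖(S p k * (k.factorial : ℝ)) * ((j.choose k : ℝ) * x ^ j)‖) :=
      summable_sum fun k _ => hnormk k
    refine Summable.of_nonneg_of_le (fun j => norm_nonneg _) (fun j => ?_) hsg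
    have hbe : b j * x ^ j = ∑ k ∈ Finset.range (p + 1),
        (S p k * (k.factorial : ℝ)) * ((j.choose k : ℝ) * x ^ j) := by
      rw [hbj j, Finset.sum_mul]
      refine Finset.sum_congr rfl fun k _ => by ring
    rw [hbe]
    exact norm_sum_le _ _
  have hgnorm : Summable (fun n : ℕ => ‖x ^ n‖) :=
    summable_norm_geometric_of_norm_lt_one hx'
  have hcauchy := hasSum_sum_range_mul_of_summable_norm
    (f := fun j => b j * x ^ j) (g := fun n => x ^ n) hbnorm hgnorm
  rw [hT.tsum_eq, (hasSum_geometric_of_norm_lt_one hx').tsum_eq] at hcauchy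
  convert hcauchy using 1
  · rfl
  · funext n
    rw [Finset.sum_mul]
    refine Finset.sum_congr rfl fun j hj => ?_
    have hjn : j ≤ n := Nat.lt_succ_iff.1 (Finset.mem_range.1 hj)
    rw [mul_assoc, ← pow_add, Nat.add_sub_cancel' hjn]
  · rw [Finset.mul_sum, Finset.sum_mul]
    refine Finset.sum_congr rfl fun k _ => ?_
    rw [div_pow]
    field_simp
    ring
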